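/- If k denotes the rank of P and n = dim V, then the eigenvalue 1 of P†P has multiplicity at least 2k − n: dim ker(P†P − id) ≥ 2k − n. (In the graph setting: if the cyclomatic number is at least |V|−1, the cycle Kirchhoff–Symanzik matrix has eigenvalue 1 with multiplicity at least |C| − |V| + 1.) -/

import Mathlib

/-- If `k` is the rank of the projection `P` and `n = dim V`, then the eigenvalue `1` of
`P†P` has multiplicity at least `2k − n`. -/
theorem statement11 {V : Type*} [NormedAddCommGroup V] [InnerProductSpace ℝ V]
    [FiniteDimensional ℝ V] (P : V →ₗ[ℝ] V) (hP : P ∘ₗ P = P)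
    (n k : ℕ) (hn : n = Module.finrank ℝ V)
    (hk : k = Module.finrank ℝ (LinearMap.range P)) :
    (Module.finrank ℝ (LinearMap.ker (LinearMap.adjoint P ∘ₗ P - LinearMap.id)) : ℤ) ≥
      2 * k - n := by
  set K := LinearMap.ker P with hK
  set R := LinearMap.range P with hR
  have hfix : ∀ x ∈ R, P x = x := by
    rintro x ⟨y, rfl⟩
    have := congrArg (fun f => f y) hP
    simpa using this
  have hsub : R ⊓ Kᗮ ≤ LinearMap.ker (LinearMap.adjoint P ∘ₗ P - LinearMap.id) := by
    rintro x ⟨hxR, hxO⟩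
    have hPx : P x = x := hfix x hxR
    have hadj : LinearMap.adjoint P x = x := by
      apply ext_inner_right ℝ
      intro y
      rw [LinearMap.adjoint_inner_left]
      have hker : P y - y ∈ K := by
        have := congrArg (fun f => f y) hP
        simp only [hK, LinearMap.mem_ker, map_sub]
        simp only [LinearMap.comp_apply] at this
        rw [this, sub_self]
      have := hxO (P y - y) hker
      have h0 : inner ℝ x (P y - y) = (0 : ℝ) := by
        rw [real_inner_comm]; exact this
      have := sub_eq_zero.mp (by simpa [inner_sub_right] using h0)
      linarith [this]
    simp [LinearMap.mem_ker, LinearMap.sub_apply, hPx, hadj]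
  have hmono := Submodule.finrank_mono hsub
  have hdim := Submodule.finrank_sup_add_finrank_inf_eq R Kᗮ
  have hKO : Module.finrank ℝ K + Module.finrank ℝ Kᗮ = Module.finrank ℝ V :=
    Submodule.finrank_add_finrank_orthogonal K
  have hrn : Module.finrank ℝ R + Module.finrank ℝ K = Module.finrank ℝ V :=
    LinearMap.finrank_range_add_finrank_ker P
  have hle : Module.finrank ℝ (R ⊔ Kᗮ : Submodule ℝ V) ≤ Module.finrank ℝ V :=
    Submodule.finrank_le _
  omega
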